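/- For any positive integer n, the n-dimensional hypercube Q_n has edge metric dimension at most n; specifically, the set B_n consisting of the all-ones vector together with the n−1 vectors obtained from it by flipping one of the first n−1 coordinates is an edge metric generator. -/

import Mathlib

open SimpleGraph

/-- Distance from a vertex `v` to an edge `e = uw`: `min (d v u) (d v w)`. -/
noncomputable def edgeDist {V : Type*} (G : SimpleGraph V) (v : V) (e : Sym2 V) : ℕ :=
  Sym2.lift ⟨fun u w => min (G.dist v u) (G.dist v w), fun u w => by simp [min_comm]⟩ e

/-- `S` is an edge metric generator: every two distinct edges are distinguished
by some vertex of `S`. -/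
def IsEdgeMetricGenerator {V : Type*} (G : SimpleGraph V) (S : Set V) : Prop :=
  ∀ e₁ ∈ G.edgeSet, ∀ e₂ ∈ G.edgeSet, e₁ ≠ e₂ →
    ∃ v ∈ S, edgeDist G v e₁ ≠ edgeDist G v e₂

/-- The edge metric dimension: minimum cardinality of an edge metric generator. -/
noncomputable def edim {V : Type*} (G : SimpleGraph V) : ℕ :=
  sInf {k | ∃ S : Finset V, S.card = k ∧ IsEdgeMetricGenerator G ↑S}

/-- The `n`-dimensional hypercube: binary vectors adjacent iff they differ in
exactly one coordinate. -/
def hypercube (n : ℕ) : SimpleGraph (Fin n → Bool) where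
  Adj x y := hammingDist x y = 1
  symm := ⟨fun x y h => by simpa [hammingDist_comm] using h⟩
  loopless := ⟨fun x h => by simp at h⟩

/-- The set consisting of the all-ones vector together with the vectors obtained
from it by flipping one of the first `n - 1` coordinates. -/
def Bset (n : ℕ) : Set (Fin n → Bool) :=
  insert (fun _ => true)
    {w | ∃ i : Fin n, (i : ℕ) < n - 1 ∧ w = Function.update (fun _ => true) i false}

/-! ### Auxiliary lemmas -/

section Aux

variable {n : ℕ}

lemma true_ne_iff (b : Bool) : (true ≠ b) ↔ b = false := by cases b <;> simp

lemma ham_eq (x y : Fin n → Bool) :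
    hammingDist x y = (Finset.univ.filter fun i => x i ≠ y i).card := rfl

lemma exists_walk (m : ℕ) : ∀ x y : Fin n → Bool, hammingDist x y = m →
    ∃ p : (hypercube n).Walk x y, p.length = m := by
  induction m with
  | zero =>
    intro x y h
    obtain rfl := eq_of_hammingDist_eq_zero h
    exact ⟨SimpleGraph.Walk.nil, rfl⟩
  | succ m ih =>
    intro x y h
    have hne : x ≠ y := by
      intro e; subst e; rw [hammingDist_self] at h; omega
    obtain ⟨i, hi⟩ : ∃ i, x i ≠ y i := Function.ne_iff.mp hne
    set x' := Function.update x i (y i) with hx'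
    have hmemx : i ∉ (Finset.univ.filter fun j => x' j ≠ y j) := by
      simp [hx', Function.update_self]
    have hins : (Finset.univ.filter fun j => x j ≠ y j)
        = insert i (Finset.univ.filter fun j => x' j ≠ y j) := by
      ext j
      by_cases hj : j = i <;> simp [hx', Function.update_apply, hj, hi]
    have hham : hammingDist x' y = m := by
      rw [ham_eq] at h ⊢
      rw [hins, Finset.card_insert_of_notMem hmemx] at h
      omega
    have hadj : (hypercube n).Adj x x' := by
      show hammingDist x x' = 1
      rw [ham_eq]
      have : (Finset.univ.filter fun j => x j ≠ x' j) = {i} := by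
        ext j
        by_cases hj : j = i <;> simp [hx', Function.update_apply, hj, hi]
      rw [this, Finset.card_singleton]
    obtain ⟨p, hp⟩ := ih x' y hham
    exact ⟨SimpleGraph.Walk.cons hadj p, by simp [hp]⟩

lemma ham_le_length {x y : Fin n → Bool} (p : (hypercube n).Walk x y) :
    hammingDist x y ≤ p.length := by
  induction p with
  | nil => simp
  | @cons a b c h p ih =>
    have h1 : hammingDist a b = 1 := h
    calc hammingDist a c ≤ hammingDist a b + hammingDist b c := hammingDist_triangle _ _ _
      _ ≤ 1 + p.length := by omega
      _ = (SimpleGraph.Walk.cons h p).length := by rw [SimpleGraph.Walk.length_cons]; omega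

lemma hyp_dist (x y : Fin n → Bool) : (hypercube n).dist x y = hammingDist x y := by
  obtain ⟨p, hp⟩ := exists_walk (hammingDist x y) x y rfl
  refine le_antisymm (hp ▸ SimpleGraph.dist_le p) ?_
  obtain ⟨q, hq⟩ := p.reachable.exists_walk_length_eq_dist
  rw [← hq]
  exact ham_le_length q

lemma adj_spec {x y : Fin n → Bool} (h : (hypercube n).Adj x y) :
    ∃ i : Fin n, y = Function.update x i (!x i) := by
  have h' : (Finset.univ.filter fun j => x j ≠ y j).card = 1 := h
  obtain ⟨i, hi⟩ := Finset.card_eq_one.mp h'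
  have hmem : ∀ j : Fin n, x j ≠ y j ↔ j = i := by
    intro j
    constructor
    · intro hj
      have : j ∈ (Finset.univ.filter fun j => x j ≠ y j) := by simp [hj]
      rw [hi] at this; exact Finset.mem_singleton.mp this
    · intro hj
      have : i ∈ (Finset.univ.filter fun j => x j ≠ y j) := by rw [hi]; simp
      subst hj; simpa using this
  refine ⟨i, funext fun j => ?_⟩
  by_cases hj : j = i
  · subst hj
    have : x j ≠ y j := (hmem j).mpr rfl
    rw [Function.update_self]
    cases hx : x j <;> cases hy : y j <;> simp_all
  · rw [Function.update_of_ne hj]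
    have := (hmem j).not.mpr hj
    tauto

lemma edge_repr {e : Sym2 (Fin n → Bool)} (he : e ∈ (hypercube n).edgeSet) :
    ∃ (x : Fin n → Bool) (i : Fin n), e = s(x, Function.update x i (!x i)) := by
  induction e using Sym2.ind with
  | _ a b =>
    rw [SimpleGraph.mem_edgeSet] at he
    obtain ⟨i, rfl⟩ := adj_spec he
    exact ⟨a, i, rfl⟩

lemma edgeDist_eq (v x : Fin n → Bool) (i : Fin n) :
    edgeDist (hypercube n) v (s(x, Function.update x i (!x i))) =
      (Finset.univ.filter fun j => j ≠ i ∧ v j ≠ x j).card := by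
  have hl : edgeDist (hypercube n) v (s(x, Function.update x i (!x i)))
      = min ((hypercube n).dist v x) ((hypercube n).dist v (Function.update x i (!x i))) := rfl
  rw [hl, hyp_dist, hyp_dist, ham_eq, ham_eq]
  set A := Finset.univ.filter fun j => j ≠ i ∧ v j ≠ x j with hA
  have hiA : i ∉ A := by simp [hA]
  by_cases hvx : v i = x i
  · have h1 : (Finset.univ.filter fun j => v j ≠ x j) = A := by
      ext j; by_cases hj : j = i <;> simp [hA, hj, hvx]
    have h2 : (Finset.univ.filter fun j => v j ≠ Function.update x i (!x i) j)
        = insert i A := by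
      ext j
      by_cases hj : j = i <;>
        simp [hA, Function.update_apply, hj, hvx]
    rw [h1, h2, Finset.card_insert_of_notMem hiA]
    omega
  · have h1 : (Finset.univ.filter fun j => v j ≠ x j) = insert i A := by
      ext j; by_cases hj : j = i <;> simp [hA, hj, hvx]
    have h2 : (Finset.univ.filter fun j => v j ≠ Function.update x i (!x i) j) = A := by
      ext j
      by_cases hj : j = i
      · subst hj
        simp only [hA, Finset.mem_filter, Function.update_self]
        have : v j = !x j := by cases hv : v j <;> cases hx : x j <;> simp_all
        simp [this]
      · simp [hA, Function.update_apply, hj]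
    rw [h1, h2, Finset.card_insert_of_notMem hiA]
    omega

/-- The set of coordinates `≠ i` where `x` is `false`. -/
def Fset (x : Fin n → Bool) (i : Fin n) : Finset (Fin n) :=
  Finset.univ.filter fun j => j ≠ i ∧ x j = false

lemma Dval_ones (x : Fin n → Bool) (i : Fin n) :
    (Finset.univ.filter fun j => j ≠ i ∧ (fun _ : Fin n => true) j ≠ x j).card
      = (Fset x i).card := by
  congr 1
  ext j
  simp [Fset, true_ne_iff]

lemma Dval_flip_self (x : Fin n → Bool) (i : Fin n) :
    (Finset.univ.filter fun j =>
        j ≠ i ∧ Function.update (fun _ : Fin n => true) i false j ≠ x j).card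
      = (Fset x i).card := by
  congr 1
  ext j
  by_cases hj : j = i <;> simp [Fset, Function.update_apply, hj, true_ne_iff]

lemma Dval_flip_true {x : Fin n → Bool} {i k : Fin n} (hki : k ≠ i) (hxk : x k = true) :
    (Finset.univ.filter fun j =>
        j ≠ i ∧ Function.update (fun _ : Fin n => true) k false j ≠ x j).card
      = (Fset x i).card + 1 := by
  have hmem : k ∉ Fset x i := by simp [Fset, hxk]
  have : (Finset.univ.filter fun j =>
      j ≠ i ∧ Function.update (fun _ : Fin n => true) k false j ≠ x j)
      = insert k (Fset x i) := by
    ext j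
    by_cases hj : j = k <;> simp [Fset, Function.update_apply, hj, hki, hxk, true_ne_iff]
  rw [this, Finset.card_insert_of_notMem hmem]

lemma Dval_flip_false {x : Fin n → Bool} {i k : Fin n} (hki : k ≠ i) (hxk : x k = false) :
    (Finset.univ.filter fun j =>
        j ≠ i ∧ Function.update (fun _ : Fin n => true) k false j ≠ x j).card + 1
      = (Fset x i).card := by
  have hmem : k ∈ Fset x i := by simp [Fset, hki, hxk]
  have : (Finset.univ.filter fun j =>
      j ≠ i ∧ Function.update (fun _ : Fin n => true) k false j ≠ x j)
      = (Fset x i).erase k := by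
    ext j
    by_cases hj : j = k <;> simp [Fset, Function.update_apply, hj, hxk, true_ne_iff, and_comm]
  rw [this, Finset.card_erase_of_mem hmem]
  have := Finset.card_pos.mpr ⟨k, hmem⟩
  omega

lemma mem_iff_of_card_eq {α : Type*} [DecidableEq α] {s t : Finset α}
    (h : s.card = t.card) (a : α) (hother : ∀ b ≠ a, (b ∈ s ↔ b ∈ t)) :
    (a ∈ s ↔ a ∈ t) := by
  have he : s.erase a = t.erase a := by
    ext b
    by_cases hb : b = a
    · simp [hb]
    · simp [Finset.mem_erase, hb, hother b hb]
  by_cases hs : a ∈ s <;> by_cases ht : a ∈ t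
  · simp [hs, ht]
  · exfalso
    have h1 := Finset.card_erase_of_mem hs
    have h2 : t.erase a = t := Finset.erase_eq_of_notMem ht
    rw [he, h2] at h1
    have := Finset.card_pos.mpr ⟨a, hs⟩
    omega
  · exfalso
    have h1 := Finset.card_erase_of_mem ht
    have h2 : s.erase a = s := Finset.erase_eq_of_notMem hs
    rw [← he, h2] at h1
    have := Finset.card_pos.mpr ⟨a, ht⟩
    omega
  · simp [hs, ht]

lemma edges_eq {x y : Fin n → Bool} {i : Fin n} (h : ∀ j ≠ i, x j = y j) :
    s(x, Function.update x i (!x i)) = s(y, Function.update y i (!y i)) := by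
  by_cases hxy : x i = y i
  · have : x = y := funext fun j => by
      by_cases hj : j = i
      · subst hj; exact hxy
      · exact h j hj
    rw [this]
  · have h1 : y = Function.update x i (!x i) := funext fun j => by
      by_cases hj : j = i
      · subst hj
        rw [Function.update_self]
        cases hx : x j <;> cases hy : y j <;> simp_all
      · rw [Function.update_of_ne hj]; exact (h j hj).symm
    have h2 : x = Function.update y i (!y i) := funext fun j => by
      by_cases hj : j = i
      · subst hj
        rw [Function.update_self]
        cases hx : x j <;> cases hy : y j <;> simp_all
      · rw [Function.update_of_ne hj]; exact h j hj
    rw [← h1, ← h2, Sym2.eq_swap]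

end Aux

theorem edim_hypercube_le (n : ℕ) (hn : 1 ≤ n) :
    IsEdgeMetricGenerator (hypercube n) (Bset n) ∧ edim (hypercube n) ≤ n := by
  have hones : (fun _ : Fin n => true) ∈ Bset n := Set.mem_insert _ _
  have hflip : ∀ k : Fin n, (k : ℕ) < n - 1 →
      Function.update (fun _ : Fin n => true) k false ∈ Bset n :=
    fun k hk => Set.mem_insert_iff.mpr (Or.inr ⟨k, hk, rfl⟩)
  have hgen : IsEdgeMetricGenerator (hypercube n) (Bset n) := by
    rintro e₁ he₁ e₂ he₂ hne
    obtain ⟨x, i, rfl⟩ := edge_repr he₁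
    obtain ⟨y, i', rfl⟩ := edge_repr he₂
    by_contra hcon
    push_neg at hcon
    apply hne
    have h0 : (Fset x i).card = (Fset y i').card := by
      have := hcon _ hones
      rwa [edgeDist_eq, edgeDist_eq, Dval_ones, Dval_ones] at this
    have hk : ∀ k : Fin n, (k : ℕ) < n - 1 →
        (Finset.univ.filter fun j =>
          j ≠ i ∧ Function.update (fun _ : Fin n => true) k false j ≠ x j).card
        = (Finset.univ.filter fun j =>
          j ≠ i' ∧ Function.update (fun _ : Fin n => true) k false j ≠ y j).card := by
      intro k hklt
      have := hcon _ (hflip k hklt)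
      rwa [edgeDist_eq, edgeDist_eq] at this
    have key : ∀ k : Fin n, (k : ℕ) < n - 1 →
        ((k = i ↔ k = i') ∧ (k ≠ i → x k = y k)) := by
      intro k hklt
      have hD := hk k hklt
      by_cases h1 : k = i <;> by_cases h2 : k = i'
      · exact ⟨iff_of_true h1 h2, fun hc => absurd h1 hc⟩
      · exfalso
        subst h1
        rw [Dval_flip_self] at hD
        cases hy : y k with
        | true => rw [Dval_flip_true h2 hy] at hD; omega
        | false => have := Dval_flip_false h2 hy; omega
      · exfalso
        subst h2
        rw [Dval_flip_self] at hD
        cases hx : x k with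
        | true => rw [Dval_flip_true h1 hx] at hD; omega
        | false => have := Dval_flip_false h1 hx; omega
      · refine ⟨iff_of_false h1 h2, fun _ => ?_⟩
        cases hx : x k <;> cases hy : y k
        · rfl
        · exfalso
          have e1 := Dval_flip_false h1 hx
          rw [Dval_flip_true h2 hy] at hD
          omega
        · exfalso
          have e2 := Dval_flip_false h2 hy
          rw [Dval_flip_true h1 hx] at hD
          omega
        · rfl
    by_cases hi : (i : ℕ) < n - 1 <;> by_cases hi' : (i' : ℕ) < n - 1
    · have hii : i = i' := (key i hi).1.mp rfl
      subst hii
      refine edges_eq fun j hj => ?_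
      by_cases hjlt : (j : ℕ) < n - 1
      · exact (key j hjlt).2 hj
      · have hother : ∀ b ≠ j, (b ∈ Fset x i ↔ b ∈ Fset y i) := by
          intro b hb
          by_cases hbi : b = i
          · simp [Fset, hbi]
          · have hbv : (b : ℕ) ≠ (j : ℕ) := fun hc => hb (Fin.ext hc)
            have hblt : (b : ℕ) < n - 1 := by
              have := b.isLt; have := j.isLt; omega
            have hxy := (key b hblt).2 hbi
            simp [Fset, hbi, hxy]
        have hm := mem_iff_of_card_eq h0 j hother
        simp only [Fset, Finset.mem_filter, Finset.mem_univ, true_and, hj] at hm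
        cases hx : x j <;> cases hy : y j <;> simp_all
    · exact absurd ((key i hi).1.mp rfl ▸ hi) hi'
    · exact absurd ((key i' hi').1.mpr rfl ▸ hi') hi
    · have hii : i = i' := by
        have := i.isLt; have := i'.isLt
        exact Fin.ext (by omega)
      subst hii
      refine edges_eq fun j hj => ?_
      have hjv : (j : ℕ) ≠ (i : ℕ) := fun hc => hj (Fin.ext hc)
      have hjlt : (j : ℕ) < n - 1 := by
        have := j.isLt; have := i.isLt; omega
      exact (key j hjlt).2 hj
  refine ⟨hgen, ?_⟩
  have hfin : (Bset n).Finite := Set.toFinite _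
  have hcard : hfin.toFinset.card ≤ n := by
    have hsub : hfin.toFinset ⊆ insert (fun _ : Fin n => true)
        ((Finset.univ.filter fun i : Fin n => (i : ℕ) < n - 1).image
          fun i => Function.update (fun _ : Fin n => true) i false) := by
      intro w hw
      rw [Set.Finite.mem_toFinset] at hw
      rw [Bset, Set.mem_insert_iff] at hw
      rcases hw with rfl | ⟨i, hi, rfl⟩
      · exact Finset.mem_insert_self _ _
      · exact Finset.mem_insert_of_mem (Finset.mem_image.mpr ⟨i, by simp [hi], rfl⟩)
    have h1 := Finset.card_le_card hsub
    have h2 := Finset.card_insert_le (fun _ : Fin n => true)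
        ((Finset.univ.filter fun i : Fin n => (i : ℕ) < n - 1).image
          fun i => Function.update (fun _ : Fin n => true) i false)
    have h3 := Finset.card_image_le
        (s := Finset.univ.filter fun i : Fin n => (i : ℕ) < n - 1)
        (f := fun i => Function.update (fun _ : Fin n => true) i false)
    have h4 : (Finset.univ.filter fun i : Fin n => (i : ℕ) < n - 1).card ≤ n - 1 := by
      have := Finset.card_le_card_of_injOn (f := Fin.val)
          (s := Finset.univ.filter fun i : Fin n => (i : ℕ) < n - 1)
          (t := Finset.range (n - 1))
          (fun a ha => by simp only [Finset.mem_coe, Finset.mem_filter] at ha; simp [ha.2])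
          (Set.injOn_of_injective Fin.val_injective)
      simpa using this
    omega
  have hmem : hfin.toFinset.card ∈
      {k | ∃ S : Finset (Fin n → Bool), S.card = k ∧ IsEdgeMetricGenerator (hypercube n) ↑S} :=
    ⟨hfin.toFinset, rfl, by rw [Set.Finite.coe_toFinset]; exact hgen⟩
  exact le_trans (Nat.sInf_le hmem) hcard
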